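/- For a point p in a finite set S ⊂ ℝ^d in general position, the out-degree of p produced by the SSG pruning procedure with angle parameter α is at most the maximum cardinality of a set of unit vectors in ℝ^d with pairwise angles at least α; in particular it is bounded by a constant depending only on α and d, independent of |S|. -/

import Mathlib

open EuclideanGeometry Real
open scoped Classical

/-- One pass of the SSG pruning procedure: process candidates in order,
accepting a candidate iff its angle at `p` with every previously accepted
neighbor is at least `α`. -/
noncomputable def ssgPruneAux {d : ℕ} (p : EuclideanSpace ℝ (Fin d)) (α : ℝ) :
    List (EuclideanSpace ℝ (Fin d)) → List (EuclideanSpace ℝ (Fin d)) →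
      List (EuclideanSpace ℝ (Fin d))
  | acc, [] => acc
  | acc, q :: rest =>
      if ∀ r ∈ acc, α ≤ ∠ r p q then ssgPruneAux p α (acc ++ [q]) rest
      else ssgPruneAux p α acc rest

/-- The SSG pruning procedure applied to the (sorted) candidate list `L`. -/
noncomputable def ssgPrune {d : ℕ} (p : EuclideanSpace ℝ (Fin d)) (α : ℝ)
    (L : List (EuclideanSpace ℝ (Fin d))) : List (EuclideanSpace ℝ (Fin d)) :=
  ssgPruneAux p α [] L

private lemma ssgPruneAux_mem {d : ℕ} (p : EuclideanSpace ℝ (Fin d)) (α : ℝ) :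
    ∀ (L acc : List (EuclideanSpace ℝ (Fin d))) (x : EuclideanSpace ℝ (Fin d)),
      x ∈ ssgPruneAux p α acc L → x ∈ acc ∨ x ∈ L
  | [], acc, x, h => Or.inl h
  | q :: rest, acc, x, h => by
    rw [ssgPruneAux] at h
    split_ifs at h with hc
    · rcases ssgPruneAux_mem p α rest (acc ++ [q]) x h with h' | h'
      · rcases List.mem_append.mp h' with h'' | h''
        · exact Or.inl h''
        · simp at h''; subst h''; simp
      · right; simp [h']
    · rcases ssgPruneAux_mem p α rest acc x h with h' | h'
      · exact Or.inl h'
      · right; simp [h']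

private lemma ssgPruneAux_pairwise {d : ℕ} (p : EuclideanSpace ℝ (Fin d)) (α : ℝ) :
    ∀ (L acc : List (EuclideanSpace ℝ (Fin d))),
      acc.Pairwise (fun a b => α ≤ ∠ a p b) →
      (ssgPruneAux p α acc L).Pairwise (fun a b => α ≤ ∠ a p b)
  | [], acc, h => h
  | q :: rest, acc, h => by
    rw [ssgPruneAux]
    split_ifs with hc
    · refine ssgPruneAux_pairwise p α rest _ ?_
      rw [List.pairwise_append]
      exact ⟨h, List.pairwise_singleton _ _, fun a ha b hb => by
        simp at hb; subst hb; exact hc a ha⟩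
    · exact ssgPruneAux_pairwise p α rest acc h

open InnerProductGeometry in
theorem stmt_13 (d : ℕ) (α : ℝ) (hα0 : 0 < α) :
    ∃ m : ℕ,
      (∀ T : Finset (EuclideanSpace ℝ (Fin d)),
        (∀ u ∈ T, ‖u‖ = 1) →
        (∀ u ∈ T, ∀ v ∈ T, u ≠ v → α ≤ InnerProductGeometry.angle u v) →
        T.card ≤ m) ∧
      ∀ (p : EuclideanSpace ℝ (Fin d)) (L : List (EuclideanSpace ℝ (Fin d))),
        (L.Pairwise fun a b => dist p a < dist p b) →
        (∀ q ∈ L, q ≠ p) →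
        (ssgPrune p α L).length ≤ m := by
  -- separation distance
  set α' : ℝ := min α π with hα'
  have hα'0 : 0 < α' := lt_min hα0 Real.pi_pos
  have hα'π : α' ≤ π := min_le_right _ _
  have hcos : Real.cos α' < 1 := by
    have := Real.cos_lt_cos_of_nonneg_of_le_pi (le_refl 0) hα'π hα'0
    simpa using this
  set ε : ℝ := Real.sqrt (2 - 2 * Real.cos α') with hε
  have hε0 : 0 < ε := Real.sqrt_pos.mpr (by linarith)
  have hsep : ∀ u v : EuclideanSpace ℝ (Fin d), ‖u‖ = 1 → ‖v‖ = 1 →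
      α ≤ InnerProductGeometry.angle u v → ε ≤ dist u v := by
    intro u v hu hv hangle
    have hangle' : α' ≤ InnerProductGeometry.angle u v :=
      (min_le_left α π).trans hangle
    have hcosle : Real.cos (InnerProductGeometry.angle u v) ≤ Real.cos α' :=
      Real.cos_le_cos_of_nonneg_of_le_pi (le_of_lt hα'0) (InnerProductGeometry.angle_le_pi u v) hangle'
    have hinner : (inner ℝ u v) = Real.cos (InnerProductGeometry.angle u v) := by
      have := InnerProductGeometry.cos_angle u v
      rw [hu, hv] at this; simpa using this.symm
    have hns : ‖u - v‖ ^ 2 = 2 - 2 * Real.cos (InnerProductGeometry.angle u v) := by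
      rw [← hinner, norm_sub_sq_real, hu, hv]; ring
    rw [dist_eq_norm]
    calc ε ≤ Real.sqrt (‖u - v‖ ^ 2) := Real.sqrt_le_sqrt (by rw [hns]; linarith)
      _ = ‖u - v‖ := Real.sqrt_sq (norm_nonneg _)
  -- finite net of the unit sphere
  have htb : TotallyBounded (Metric.sphere (0 : EuclideanSpace ℝ (Fin d)) 1) :=
    (isCompact_sphere _ _).totallyBounded
  obtain ⟨t, htfin, htcov⟩ := Metric.totallyBounded_iff.mp htb (ε / 2) (by positivity)
  set m : ℕ := htfin.toFinset.card with hm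
  have hbound : ∀ T : Finset (EuclideanSpace ℝ (Fin d)),
      (∀ u ∈ T, ‖u‖ = 1) →
      (∀ u ∈ T, ∀ v ∈ T, u ≠ v → α ≤ InnerProductGeometry.angle u v) →
      T.card ≤ m := by
    intro T hT1 hTang
    have hnear : ∀ u ∈ T, ∃ y ∈ htfin.toFinset, dist u y < ε / 2 := by
      intro u hu
      have : u ∈ ⋃ y ∈ t, Metric.ball y (ε / 2) :=
        htcov (by simpa [mem_sphere_zero_iff_norm] using hT1 u hu)
      simp only [Set.mem_iUnion, Metric.mem_ball] at this
      obtain ⟨y, hy, hdy⟩ := this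
      exact ⟨y, htfin.mem_toFinset.mpr hy, hdy⟩
    choose g hg1 hg2 using hnear
    apply Finset.card_le_card_of_injOn (fun u => if h : u ∈ T then g u h else 0)
    · intro u hu; simp only [Finset.mem_coe] at hu; simp [hu, htfin.mem_toFinset.mp (hg1 u hu)]
    · intro u hu v hv huv
      simp only [Finset.mem_coe] at hu hv
      have huv' : g u hu = g v hv := by simpa [dif_pos hu, dif_pos hv] using huv
      by_contra hne
      have h1 := hsep u v (hT1 u hu) (hT1 v hv) (hTang u hu v hv hne)
      have h2 : dist u v < ε :=
        calc dist u v ≤ dist u (g u hu) + dist (g v hv) v := by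
              rw [← huv']; exact dist_triangle _ _ _
          _ = dist u (g u hu) + dist v (g v hv) := by rw [dist_comm (g v hv) v]
          _ < ε / 2 + ε / 2 := add_lt_add (hg2 u hu) (hg2 v hv)
          _ = ε := by ring
      linarith
  refine ⟨m, hbound, ?_⟩
  intro p L _ hnp
  set L' := ssgPrune p α L with hL'
  have hmem : ∀ x ∈ L', x ≠ p := by
    intro x hx
    rcases ssgPruneAux_mem p α L [] x hx with h | h
    · simp at h
    · exact hnp x h
  have hpw : L'.Pairwise (fun a b => α ≤ ∠ a p b) :=
    ssgPruneAux_pairwise p α L [] (List.Pairwise.nil)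
  -- directions
  set f : EuclideanSpace ℝ (Fin d) → EuclideanSpace ℝ (Fin d) :=
    fun q => ‖q - p‖⁻¹ • (q - p) with hf
  have hnorm : ∀ q, q ≠ p → ‖f q‖ = 1 := by
    intro q hq
    have h0 : q - p ≠ 0 := sub_ne_zero.mpr hq
    rw [hf]; simp [norm_smul, abs_of_nonneg, inv_mul_cancel₀ (norm_ne_zero_iff.mpr h0)]
  have hangf : ∀ q r, q ≠ p → r ≠ p →
      InnerProductGeometry.angle (f q) (f r) = ∠ q p r := by
    intro q r hq hr
    have h0q : (0:ℝ) < ‖q - p‖⁻¹ :=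
      inv_pos.mpr (norm_pos_iff.mpr (sub_ne_zero.mpr hq))
    have h0r : (0:ℝ) < ‖r - p‖⁻¹ :=
      inv_pos.mpr (norm_pos_iff.mpr (sub_ne_zero.mpr hr))
    rw [hf]
    rw [InnerProductGeometry.angle_smul_left_of_pos _ _ h0q,
        InnerProductGeometry.angle_smul_right_of_pos _ _ h0r]
    rfl
  have hself : ∀ q, q ≠ p → ∠ q p q = 0 := by
    intro q hq
    show InnerProductGeometry.angle (q - p) (q - p) = 0
    exact InnerProductGeometry.angle_self (sub_ne_zero.mpr hq)
  have hsym : Symmetric (fun a b => α ≤ ∠ a p b) := fun a b h => by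
    show α ≤ ∠ b p a
    rw [EuclideanGeometry.angle_comm]
    exact h
  have hpair : ∀ q ∈ L', ∀ r ∈ L', q ≠ r → α ≤ ∠ q p r := fun q hq r hr hne =>
    by haveI : Std.Symm (fun a b => α ≤ ∠ a p b) := ⟨fun a b h => hsym h⟩; exact hpw.forall hq hr hne
  have hfne : ∀ q, q ≠ p → f q ≠ 0 := fun q hq => by
    have := hnorm q hq; intro h0; rw [h0] at this; simp at this
  have hangself : ∀ q r, q ∈ L' → r ∈ L' → f q = f r → q = r := by
    intro q r hq hr hfeq
    by_contra hne
    have h1 : α ≤ ∠ q p r := hpair q hq r hr hne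
    have h2 : ∠ q p r = 0 := by
      rw [← hangf q r (hmem q hq) (hmem r hr), hfeq,
        InnerProductGeometry.angle_self (hfne r (hmem r hr))]
    linarith
  have hpw2 : L'.Pairwise (fun a b => f a ≠ f b) := by
    refine hpw.imp_of_mem ?_
    intro a b ha hb hab hfeq
    have h2 : ∠ a p b = 0 := by
      rw [← hangf a b (hmem a ha) (hmem b hb), hfeq,
        InnerProductGeometry.angle_self (hfne b (hmem b hb))]
    linarith
  have hnodup : (L'.map f).Nodup := List.pairwise_map.mpr hpw2
  set T : Finset (EuclideanSpace ℝ (Fin d)) := (L'.map f).toFinset with hT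
  have hcard : (L'.map f).toFinset.card = L'.length := by
    rw [List.toFinset_card_of_nodup hnodup, List.length_map]
  have hTm : T.card ≤ m := by
    apply hbound
    · intro u hu
      rw [hT, List.mem_toFinset, List.mem_map] at hu
      obtain ⟨q, hq, rfl⟩ := hu
      exact hnorm q (hmem q hq)
    · intro u hu v hv huv
      rw [hT, List.mem_toFinset, List.mem_map] at hu hv
      obtain ⟨q, hq, rfl⟩ := hu
      obtain ⟨r, hr, rfl⟩ := hv
      have hne : q ≠ r := fun h => huv (by rw [h])
      rw [hangf q r (hmem q hq) (hmem r hr)]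
      exact hpair q hq r hr hne
  calc L'.length = T.card := hcard.symm
    _ ≤ m := hTm
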